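/- If G is a k-degenerate graph on n vertices, then γ'_R(G) ≤ (2k/(2k+1))·n. -/

import Mathlib

open Finset SimpleGraph

/-- An edge Roman dominating function: values in {0,1,2} on edges (0 elsewhere),
and every edge with value 0 is adjacent to a distinct edge with value 2
sharing an endpoint with it. -/
def EdgeRDF {V : Type*} (G : SimpleGraph V) (f : Sym2 V → ℕ) : Prop :=
  (∀ e, f e ≤ 2) ∧ (∀ e, e ∉ G.edgeSet → f e = 0) ∧
  (∀ e ∈ G.edgeSet, f e = 0 →
    ∃ e' ∈ G.edgeSet, f e' = 2 ∧ e' ≠ e ∧ ∃ v, v ∈ e ∧ v ∈ e')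

/-- The edge Roman domination number: the minimum weight of an
edge Roman dominating function. -/
noncomputable def edgeRomanNumber (V : Type*) [Fintype V] [DecidableEq V]
    (G : SimpleGraph V) : ℕ :=
  sInf {w | ∃ f : Sym2 V → ℕ, EdgeRDF G f ∧ w = ∑ e : Sym2 V, f e}


/-- A graph is `k`-degenerate if every nonempty subgraph contains
a vertex of degree at most `k`. -/
def KDegenerate {V : Type*} (G : SimpleGraph V) (k : ℕ) : Prop :=
  ∀ H : G.Subgraph, H.verts.Nonempty → ∃ v ∈ H.verts, (H.neighborSet v).ncard ≤ k

section Aux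

variable {V : Type*} [DecidableEq V]

/-- The two-element finset of vertices of a `Sym2`. -/
def pairFinset (e : Sym2 V) : Finset V :=
  Sym2.lift ⟨fun a b => ({a, b} : Finset V), fun a b => Finset.pair_comm a b⟩ e

lemma mem_pairFinset {e : Sym2 V} {x : V} : x ∈ pairFinset e ↔ x ∈ e := by
  induction e using Sym2.ind with
  | _ a b => simp [pairFinset, Sym2.mem_iff]

lemma card_pairFinset {e : Sym2 V} (h : ¬ e.IsDiag) : (pairFinset e).card = 2 := by
  induction e using Sym2.ind with
  | _ a b =>
    have hab : a ≠ b := by simpa using h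
    simp [pairFinset, hab]

end Aux

section Key

variable {V : Type*} [Fintype V] [DecidableEq V]

lemma key (G : SimpleGraph V) (k : ℕ) (hG : KDegenerate G k) (s : Finset V) :
    ∃ f : Sym2 V → ℕ,
      (∀ e, f e ≤ 2) ∧
      (∀ e, f e ≠ 0 → e ∈ G.edgeSet ∧ ∀ x ∈ e, x ∈ s) ∧
      (∀ e ∈ G.edgeSet, (∀ x ∈ e, x ∈ s) → f e = 0 →
        ∃ e' ∈ G.edgeSet, f e' = 2 ∧ e' ≠ e ∧ ∃ v, v ∈ e ∧ v ∈ e') ∧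
      (2 * k + 1) * (∑ e : Sym2 V, f e) ≤ 2 * k * s.card := by
  classical
  induction s using Finset.strongInduction with
  | _ s ih =>
  rcases s.eq_empty_or_nonempty with rfl | hs
  · refine ⟨fun _ => 0, by simp, by simp, ?_, by simp⟩
    intro e he hin h0
    exfalso
    induction e using Sym2.ind with
    | _ a b => exact absurd (hin a (Sym2.mem_mk_left a b)) (by simp)
  -- Get a vertex of small degree in the induced subgraph on s.
  have hne : ((⊤ : G.Subgraph).induce ↑s).verts.Nonempty := by
    simpa using hs
  obtain ⟨v, hv, hdeg⟩ := hG _ hne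
  have hvs : v ∈ s := by simpa using hv
  set T : Finset V := s.filter (fun w => G.Adj v w) with hTdef
  have hT : ∀ w, w ∈ T ↔ w ∈ s ∧ G.Adj v w := by
    intro w; simp [hTdef]
  have hTk : T.card ≤ k := by
    have hset : ((⊤ : G.Subgraph).induce ↑s).neighborSet v = ↑T := by
      ext w
      simp only [Subgraph.mem_neighborSet, Subgraph.induce_adj, Subgraph.top_adj,
        Finset.coe_filter, Set.mem_setOf_eq, hTdef]
      constructor
      · rintro ⟨-, hw, hadj⟩; exact ⟨hw, hadj⟩
      · rintro ⟨hw, hadj⟩; exact ⟨by simpa using hvs, hw, hadj⟩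
    rwa [hset, Set.ncard_coe_finset] at hdeg
  -- The pool of candidate matching edges.
  set EH : Finset (Sym2 V) :=
    G.edgeFinset.filter (fun e => (∀ x ∈ e, x ∈ s ∧ x ≠ v) ∧ ∃ x ∈ e, x ∈ T) with hEHdef
  -- Matchings inside EH; take one of maximum cardinality.
  set MS : Finset (Finset (Sym2 V)) :=
    EH.powerset.filter
      (fun D => ∀ e ∈ D, ∀ e' ∈ D, e ≠ e' → ∀ x, x ∈ e → x ∉ e') with hMSdef
  have hMSne : MS.Nonempty := ⟨∅, by simp [hMSdef]⟩
  obtain ⟨D, hDMS, hDmax⟩ := MS.exists_max_image Finset.card hMSne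
  have hDsub : D ⊆ EH := by
    have := (Finset.mem_filter.1 hDMS).1
    exact Finset.mem_powerset.1 this
  have hDmatch : ∀ e ∈ D, ∀ e' ∈ D, e ≠ e' → ∀ x, x ∈ e → x ∉ e' :=
    (Finset.mem_filter.1 hDMS).2
  have hEH : ∀ e ∈ D, e ∈ G.edgeSet ∧ (∀ x ∈ e, x ∈ s ∧ x ≠ v) ∧ ∃ x ∈ e, x ∈ T := by
    intro e he
    have := Finset.mem_filter.1 (hDsub he)
    exact ⟨SimpleGraph.mem_edgeFinset.1 this.1, this.2.1, this.2.2⟩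
  set DV : Finset V := D.biUnion pairFinset with hDVdef
  have hDV : ∀ x, x ∈ DV ↔ ∃ e ∈ D, x ∈ e := by
    intro x
    simp [hDVdef, mem_pairFinset]
  have hDVs : ∀ x ∈ DV, x ∈ s ∧ x ≠ v := by
    intro x hx
    obtain ⟨e, he, hxe⟩ := (hDV x).1 hx
    exact (hEH e he).2.1 x hxe
  have hDVcard : DV.card = 2 * D.card := by
    rw [hDVdef, Finset.card_biUnion]
    · rw [Finset.sum_congr rfl (fun e he => card_pairFinset
        (SimpleGraph.not_isDiag_of_mem_edgeSet G (hEH e he).1))]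
      simp [mul_comm]
    · intro e he e' he' hne'
      rw [Function.onFun, Finset.disjoint_left]
      intro x hx hx'
      exact hDmatch e he e' he' hne' x (mem_pairFinset.1 hx) (mem_pairFinset.1 hx')
  set Z : Finset V := T \ DV with hZdef
  -- maximality: neighbours (inside s, other than v) of unmatched T-vertices are matched
  have hmax' : ∀ x y, x ∈ T → x ∉ DV → y ∈ s → y ≠ v → G.Adj x y → y ∈ DV := by
    intro x y hxT hxDV hys hyv hadj
    by_contra hyDV
    have hxs : x ∈ s := ((hT x).1 hxT).1
    have hxv : x ≠ v := (G.ne_of_adj ((hT x).1 hxT).2).symm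
    have hxy : x ≠ y := G.ne_of_adj hadj
    have he0 : s(x, y) ∈ EH := by
      rw [hEHdef, Finset.mem_filter]
      refine ⟨SimpleGraph.mem_edgeFinset.2 hadj, ?_, ⟨x, Sym2.mem_mk_left x y, hxT⟩⟩
      intro z hz
      rcases Sym2.mem_iff.1 hz with rfl | rfl
      · exact ⟨hxs, hxv⟩
      · exact ⟨hys, hyv⟩
    have hnotin : s(x, y) ∉ D := by
      intro hin
      exact hxDV ((hDV x).2 ⟨_, hin, Sym2.mem_mk_left x y⟩)
    have hD' : insert s(x, y) D ∈ MS := by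
      rw [hMSdef, Finset.mem_filter, Finset.mem_powerset]
      constructor
      · exact Finset.insert_subset he0 hDsub
      · intro e he e' he' hne' z hze hze'
        have hmem : ∀ w, w ∈ (s(x, y) : Sym2 V) → w ∉ DV := by
          intro w hw
          rcases Sym2.mem_iff.1 hw with rfl | rfl
          exacts [hxDV, hyDV]
        have hDmem : ∀ d ∈ D, ∀ w, w ∈ d → w ∈ DV := fun d hd w hw => (hDV w).2 ⟨d, hd, hw⟩
        rcases Finset.mem_insert.1 he with he1 | he1
        · rcases Finset.mem_insert.1 he' with he2 | he2
          · exact hne' (he1.trans he2.symm)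
          · subst he1; exact hmem z hze (hDmem e' he2 z hze')
        · rcases Finset.mem_insert.1 he' with he2 | he2
          · subst he2; exact hmem z hze' (hDmem e he1 z hze)
          · exact hDmatch e he1 e' he2 hne' z hze hze'
    have := hDmax _ hD'
    rw [Finset.card_insert_of_notMem hnotin] at this
    omega
  -- cardinality bound : D.card + Z.card ≤ T.card
  have hDT : D.card ≤ (T ∩ DV).card := by
    have hgood : ∀ e ∈ D, ∃ x, x ∈ e ∧ x ∈ T := by
      intro e he
      obtain ⟨x, hx, hxT⟩ := (hEH e he).2.2
      exact ⟨x, hx, hxT⟩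
    refine Finset.card_le_card_of_injOn
      (fun e => if h : ∃ x, x ∈ e ∧ x ∈ T then h.choose else v) ?_ ?_
    · intro e he
      show (if h : ∃ x, x ∈ e ∧ x ∈ T then h.choose else v) ∈ T ∩ DV
      rw [dif_pos (hgood e he)]
      obtain ⟨hx, hxT⟩ := (hgood e he).choose_spec
      exact Finset.mem_inter.2 ⟨hxT, (hDV _).2 ⟨e, he, hx⟩⟩
    · intro e he e' he' heq
      simp only [Finset.mem_coe] at he he'
      by_contra hne'
      have heq' : (if h : ∃ x, x ∈ e ∧ x ∈ T then h.choose else v)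
          = (if h : ∃ x, x ∈ e' ∧ x ∈ T then h.choose else v) := heq
      rw [dif_pos (hgood e he), dif_pos (hgood e' he')] at heq'
      have h1 := (hgood e he).choose_spec.1
      have h2 := (hgood e' he').choose_spec.1
      rw [heq'] at h1
      exact hDmatch e' he' e he (Ne.symm hne') _ h2 h1
  have hZcard : Z.card + (T ∩ DV).card = T.card := by
    rw [hZdef]
    exact Finset.card_sdiff_add_card_inter T DV
  have hbound : 2 * D.card + Z.card ≤ 2 * k := by
    have h1 : D.card + Z.card ≤ T.card := by omega
    omega
  -- the removed set
  set S : Finset V := insert v (DV ∪ Z) with hSdef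
  have hvDV : v ∉ DV := fun h => (hDVs v h).2 rfl
  have hvZ : v ∉ Z := by
    intro h
    have := ((hT v).1 (Finset.mem_sdiff.1 h).1).2
    exact G.loopless.irrefl v this
  have hZs : ∀ x ∈ Z, x ∈ s := fun x hx => ((hT x).1 (Finset.mem_sdiff.1 hx).1).1
  have hSsub : S ⊆ s := by
    intro x hx
    rcases Finset.mem_insert.1 hx with rfl | hx
    · exact hvs
    rcases Finset.mem_union.1 hx with hx | hx
    · exact (hDVs x hx).1
    · exact hZs x hx
  have hScard : S.card = 1 + 2 * D.card + Z.card := by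
    rw [hSdef, Finset.card_insert_of_notMem, Finset.card_union_of_disjoint]
    · omega
    · rw [Finset.disjoint_left]
      intro x hx hx'
      exact (Finset.mem_sdiff.1 hx').2 hx
    · intro h
      rcases Finset.mem_union.1 h with h | h
      · exact hvDV h
      · exact hvZ h
  have hssub : s \ S ⊂ s := by
    refine Finset.ssubset_iff_of_subset (Finset.sdiff_subset) |>.2 ?_
    exact ⟨v, hvs, fun h => (Finset.mem_sdiff.1 h).2 (Finset.mem_insert_self v _)⟩
  obtain ⟨f', hf'2, hf'supp, hf'dom, hf'w⟩ := ih (s \ S) hssub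
  -- the new function
  set P : Sym2 V → Prop := fun e => ∃ u ∈ Z, e = s(v, u) with hPdef
  set f : Sym2 V → ℕ :=
    fun e => f' e + (if e ∈ D then 2 else 0) + (if P e then 1 else 0) with hfdef
  -- disjoint supports
  have hf'S : ∀ e, f' e ≠ 0 → ∀ x ∈ e, x ∈ s ∧ x ∉ S := by
    intro e hfe x hx
    have := (hf'supp e hfe).2 x hx
    exact ⟨(Finset.mem_sdiff.1 this).1, (Finset.mem_sdiff.1 this).2⟩
  have hDf' : ∀ e ∈ D, f' e = 0 := by
    intro e he
    by_contra h
    obtain ⟨x, hx, hxT⟩ := (hEH e he).2.2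
    have hxS : x ∈ S := Finset.mem_insert_of_mem (Finset.mem_union_left _ ((hDV x).2 ⟨e, he, hx⟩))
    exact (hf'S e h x hx).2 hxS
  have hDP : ∀ e ∈ D, ¬ P e := by
    intro e he hPe
    obtain ⟨u, hu, heq⟩ := hPe
    have hv' : v ∈ e := by rw [heq]; exact Sym2.mem_mk_left v u
    exact ((hEH e he).2.1 v hv').2 rfl
  have hPf' : ∀ e, P e → f' e = 0 := by
    intro e hPe
    obtain ⟨u, hu, heq⟩ := hPe
    by_contra h
    have hv' : v ∈ e := by rw [heq]; exact Sym2.mem_mk_left v u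
    exact (hf'S e h v hv').2 (Finset.mem_insert_self v _)
  have hPD : ∀ e, P e → e ∉ D := fun e hPe he => hDP e he hPe
  have hfD : ∀ e ∈ D, f e = 2 := by
    intro e he
    simp [hfdef, hDf' e he, he, hDP e he]
  have hfP : ∀ e, P e → f e = 1 := by
    intro e hPe
    simp [hfdef, hPf' e hPe, hPD e hPe, hPe]
  have hfelse : ∀ e, e ∉ D → ¬ P e → f e = f' e := by
    intro e he hPe
    simp [hfdef, he, hPe]
  -- property 1
  have prop1 : ∀ e, f e ≤ 2 := by
    intro e
    by_cases he : e ∈ D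
    · rw [hfD e he]
    by_cases hPe : P e
    · rw [hfP e hPe]; omega
    · rw [hfelse e he hPe]; exact hf'2 e
  -- property 2
  have prop2 : ∀ e, f e ≠ 0 → e ∈ G.edgeSet ∧ ∀ x ∈ e, x ∈ s := by
    intro e hfe
    by_cases he : e ∈ D
    · exact ⟨(hEH e he).1, fun x hx => ((hEH e he).2.1 x hx).1⟩
    by_cases hPe : P e
    · obtain ⟨u, hu, heq⟩ := hPe
      have hadj : G.Adj v u := ((hT u).1 (Finset.mem_sdiff.1 hu).1).2
      rw [heq]
      refine ⟨hadj, ?_⟩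
      intro x hx
      rcases Sym2.mem_iff.1 hx with h | h
      · rw [h]; exact hvs
      · rw [h]; exact hZs u hu
    · rw [hfelse e he hPe] at hfe
      exact ⟨(hf'supp e hfe).1, fun x hx => (hf'S e hfe x hx).1⟩
  -- helper: domination via a matched vertex
  have domDV : ∀ (e : Sym2 V), f e = 0 → ∀ x ∈ DV, x ∈ e →
      ∃ e' ∈ G.edgeSet, f e' = 2 ∧ e' ≠ e ∧ ∃ w, w ∈ e ∧ w ∈ e' := by
    intro e hfe x hxDV hxe
    obtain ⟨d, hd, hxd⟩ := (hDV x).1 hxDV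
    refine ⟨d, (hEH d hd).1, hfD d hd, ?_, x, hxe, hxd⟩
    intro h
    rw [← h, hfD d hd] at hfe
    omega
  -- property 3
  have prop3 : ∀ e ∈ G.edgeSet, (∀ x ∈ e, x ∈ s) → f e = 0 →
      ∃ e' ∈ G.edgeSet, f e' = 2 ∧ e' ≠ e ∧ ∃ w, w ∈ e ∧ w ∈ e' := by
    intro e he hin hfe
    have heD : e ∉ D := fun h => by rw [hfD e h] at hfe; omega
    have hePnot : ¬ P e := fun h => by rw [hfP e h] at hfe; omega
    have hf'e : f' e = 0 := by rw [hfelse e heD hePnot] at hfe; exact hfe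
    induction e using Sym2.ind with
    | _ a b =>
    have hadj : G.Adj a b := he
    have has : a ∈ s := hin a (Sym2.mem_mk_left a b)
    have hbs : b ∈ s := hin b (Sym2.mem_mk_right a b)
    by_cases haDV : a ∈ DV
    · exact domDV _ hfe a haDV (Sym2.mem_mk_left a b)
    by_cases hbDV : b ∈ DV
    · exact domDV _ hfe b hbDV (Sym2.mem_mk_right a b)
    -- neither endpoint is matched
    by_cases hav : a = v
    · subst hav
      have hbT : b ∈ T := (hT b).2 ⟨hbs, hadj⟩
      have hbZ : b ∈ Z := Finset.mem_sdiff.2 ⟨hbT, hbDV⟩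
      exact absurd ⟨b, hbZ, rfl⟩ hePnot
    by_cases hbv : b = v
    · subst hbv
      have haT : a ∈ T := (hT a).2 ⟨has, hadj.symm⟩
      have haZ : a ∈ Z := Finset.mem_sdiff.2 ⟨haT, haDV⟩
      exact absurd ⟨a, haZ, Sym2.eq_swap⟩ hePnot
    -- both differ from v
    by_cases haT : a ∈ T
    · exact absurd (hmax' a b haT haDV hbs hbv hadj) hbDV
    by_cases hbT : b ∈ T
    · exact absurd (hmax' b a hbT hbDV has hav hadj.symm) haDV
    -- edge entirely inside s \ S
    have hinside : ∀ x ∈ (s(a, b) : Sym2 V), x ∈ s \ S := by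
      intro x hx
      have hxS : x ∈ s ∧ x ∉ DV ∧ x ≠ v ∧ x ∉ T := by
        rcases Sym2.mem_iff.1 hx with rfl | rfl
        · exact ⟨has, haDV, hav, haT⟩
        · exact ⟨hbs, hbDV, hbv, hbT⟩
      refine Finset.mem_sdiff.2 ⟨hxS.1, ?_⟩
      intro hxS'
      rcases Finset.mem_insert.1 hxS' with rfl | h
      · exact hxS.2.2.1 rfl
      rcases Finset.mem_union.1 h with h | h
      · exact hxS.2.1 h
      · exact hxS.2.2.2 (Finset.mem_sdiff.1 h).1
    obtain ⟨e', he', hfe', hne', w, hw, hw'⟩ := hf'dom s(a, b) he hinside hf'e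
    refine ⟨e', he', ?_, hne', w, hw, hw'⟩
    have h1 : e' ∉ D := fun h => by rw [hDf' e' h] at hfe'; omega
    have h2 : ¬ P e' := fun h => by rw [hPf' e' h] at hfe'; omega
    rw [hfelse e' h1 h2]; exact hfe'
  -- the weight
  have hsumD : (∑ e : Sym2 V, (if e ∈ D then 2 else 0)) = 2 * D.card := by
    rw [Finset.sum_ite_mem, Finset.univ_inter, Finset.sum_const, smul_eq_mul]
    ring
  have hsumP : (∑ e : Sym2 V, (if P e then 1 else 0)) = Z.card := by
    rw [← Finset.sum_filter]
    rw [Finset.sum_const, smul_eq_mul, mul_one]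
    have himg : Finset.univ.filter P = Z.image (fun u => s(v, u)) := by
      ext e
      simp only [Finset.mem_filter, Finset.mem_univ, true_and, Finset.mem_image, hPdef]
      constructor
      · rintro ⟨u, hu, rfl⟩; exact ⟨u, hu, rfl⟩
      · rintro ⟨u, hu, rfl⟩; exact ⟨u, hu, rfl⟩
    rw [himg, Finset.card_image_of_injOn]
    intro u hu u' hu' heq
    exact Sym2.congr_right.1 heq
  have hsum : (∑ e : Sym2 V, f e) = (∑ e : Sym2 V, f' e) + 2 * D.card + Z.card := by
    rw [hfdef]
    rw [Finset.sum_add_distrib, Finset.sum_add_distrib, hsumD, hsumP]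
  have hcards : (s \ S).card + S.card = s.card := Finset.card_sdiff_add_card_eq_card hSsub
  have prop4 : (2 * k + 1) * (∑ e : Sym2 V, f e) ≤ 2 * k * s.card := by
    rw [hsum]
    have h1 : (2 * k + 1) * (2 * D.card + Z.card) ≤ 2 * k * S.card := by
      rw [hScard]
      nlinarith [hbound]
    calc (2 * k + 1) * ((∑ e : Sym2 V, f' e) + 2 * D.card + Z.card)
        = (2 * k + 1) * (∑ e : Sym2 V, f' e) + (2 * k + 1) * (2 * D.card + Z.card) := by ring
      _ ≤ 2 * k * (s \ S).card + 2 * k * S.card := Nat.add_le_add hf'w h1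
      _ = 2 * k * s.card := by rw [← hcards]; ring
  exact ⟨f, prop1, prop2, prop3, prop4⟩

end Key

/-- If `G` is a `k`-degenerate graph on `n` vertices, then `γ'_R(G) ≤ (2k/(2k+1))·n`. -/
theorem edgeRomanNumber_le_of_kDegenerate {V : Type*} [Fintype V] [DecidableEq V]
    (G : SimpleGraph V) (k : ℕ) (hG : KDegenerate G k) :
    (edgeRomanNumber V G : ℝ) ≤ (2 * k : ℝ) / (2 * k + 1) * Fintype.card V := by
  obtain ⟨f, h2, hsupp, hdom, hw⟩ := key G k hG Finset.univ
  have hRDF : EdgeRDF G f := by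
    refine ⟨h2, ?_, ?_⟩
    · intro e he
      by_contra h
      exact he (hsupp e h).1
    · intro e he h0
      exact hdom e he (fun x _ => Finset.mem_univ x) h0
  have h1 : edgeRomanNumber V G ≤ ∑ e : Sym2 V, f e :=
    Nat.sInf_le ⟨f, hRDF, rfl⟩
  have h3 : (2 * k + 1) * edgeRomanNumber V G ≤ 2 * k * Fintype.card V := by
    calc (2 * k + 1) * edgeRomanNumber V G ≤ (2 * k + 1) * (∑ e : Sym2 V, f e) :=
          Nat.mul_le_mul_left _ h1
      _ ≤ 2 * k * Finset.univ.card := hw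
      _ = 2 * k * Fintype.card V := by rw [Finset.card_univ]
  have hk : (0 : ℝ) < 2 * (k : ℝ) + 1 := by positivity
  rw [div_mul_eq_mul_div, le_div_iff₀ hk]
  have := (Nat.cast_le (α := ℝ)).2 h3
  push_cast at this ⊢
  nlinarith [this]
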